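/- Let s₀ ∈ ℝ and C₅ > 0, and let w : [s₀, ∞) → ℝ be a twice differentiable nonnegative function satisfying w''(s) ≤ C₅ − w(s) for all s ≥ s₀. Then w is bounded from above on [s₀, ∞); in fact there is a constant depending only on C₅, namely (C₅ + 1) + [2(C₅ + 1)]², bounding w(s) for all sufficiently large s. -/

import Mathlib

open MeasureTheory Metric Real Set Filter

noncomputable section

/-- Euclidean space ℝⁿ. -/
abbrev En (n : ℕ) : Type := EuclideanSpace ℝ (Fin n)

/-- The standard Laplacian on ℝⁿ: Δu(x) = ∑ᵢ ∂²u/∂xᵢ². -/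
def lap {n : ℕ} (u : En n → ℝ) (x : En n) : ℝ :=
  ∑ i : Fin n, fderiv ℝ (fun y => fderiv ℝ u y (EuclideanSpace.single i 1)) x
    (EuclideanSpace.single i 1)

/-- The surface measure dθ on the unit sphere S^{n-1} ⊂ ℝⁿ. -/
def sphereM (n : ℕ) : Measure (sphere (0 : En n) 1) :=
  (volume : Measure (En n)).toSphere

/-- The radial derivative (∂u/∂r)(x) = (x/|x|)·∇u(x). -/
def radDeriv {n : ℕ} (u : En n → ℝ) (x : En n) : ℝ :=
  fderiv ℝ u x (‖x‖⁻¹ • x)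

/-- The associated function on the cylinder: v(s,θ) = e^{(n-2)s/2} u(e^s θ). -/
def vfun {n : ℕ} (u : En n → ℝ) (s : ℝ) (θ : sphere (0 : En n) 1) : ℝ :=
  Real.exp (((n : ℝ) - 2) * s / 2) * u (Real.exp s • (θ : En n))

/-- The partial derivative ∂v/∂s. -/
def dvds {n : ℕ} (u : En n → ℝ) (s : ℝ) (θ : sphere (0 : En n) 1) : ℝ :=
  deriv (fun t => vfun u t θ) s

/-- The Pohozaev quantity P(u,r) = ((n-2)/(2n)) ∫_{B₀(r)} x·∇K(x) u(x)^{2n/(n-2)} dx. -/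
def poho {n : ℕ} (K u : En n → ℝ) (r : ℝ) : ℝ :=
  (((n : ℝ) - 2) / (2 * (n : ℝ))) *
    ∫ x in ball (0 : En n) r,
      (inner ℝ x (gradient K x) : ℝ) * u x ^ (2 * (n : ℝ) / ((n : ℝ) - 2))

open Topology

private lemma mono_aux {f : ℝ → ℝ} {a b : ℝ} (hab : a ≤ b)
    (hf : ∀ t ∈ Icc a b, DifferentiableAt ℝ f t)
    (hf' : ∀ t ∈ Ioo a b, deriv f t ≤ 0) : f b ≤ f a := by
  have hc : ContinuousOn f (Icc a b) := fun t ht => (hf t ht).continuousAt.continuousWithinAt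
  have hd : DifferentiableOn ℝ f (interior (Icc a b)) := by
    rw [interior_Icc]
    exact fun t ht => (hf t (Ioo_subset_Icc_self ht)).differentiableWithinAt
  exact antitoneOn_of_deriv_nonpos (convex_Icc a b) hc hd
    (by rw [interior_Icc]; exact hf') (left_mem_Icc.2 hab) (right_mem_Icc.2 hab) hab

private lemma mono_aux' {f : ℝ → ℝ} {a b : ℝ} (hab : a ≤ b)
    (hf : ∀ t ∈ Icc a b, DifferentiableAt ℝ f t)
    (hf' : ∀ t ∈ Ioo a b, 0 ≤ deriv f t) : f a ≤ f b := by
  have hc : ContinuousOn f (Icc a b) := fun t ht => (hf t ht).continuousAt.continuousWithinAt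
  have hd : DifferentiableOn ℝ f (interior (Icc a b)) := by
    rw [interior_Icc]
    exact fun t ht => (hf t (Ioo_subset_Icc_self ht)).differentiableWithinAt
  exact monotoneOn_of_deriv_nonneg (convex_Icc a b) hc hd
    (by rw [interior_Icc]; exact hf') (left_mem_Icc.2 hab) (right_mem_Icc.2 hab) hab

private lemma deriv_le_aux {f : ℝ → ℝ} {a b c : ℝ}
    (h2 : ∀ t ∈ Icc a b, DifferentiableAt ℝ (deriv f) t)
    (h3 : ∀ t ∈ Icc a b, deriv (deriv f) t ≤ c) :
    ∀ t ∈ Icc a b, deriv f t ≤ deriv f a + c * (t - a) := by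
  intro t ht
  have key : (fun u => deriv f u - c * u) t ≤ (fun u => deriv f u - c * u) a := by
    apply mono_aux ht.1
    · intro u hu
      exact (h2 u ⟨hu.1, hu.2.trans ht.2⟩).sub ((differentiable_id.const_mul c) u)
    · intro u hu
      have hu' : u ∈ Icc a b := ⟨hu.1.le, hu.2.le.trans ht.2⟩
      have hd : HasDerivAt (fun u => deriv f u - c * u) (deriv (deriv f) u - c) u := by
        simpa using (h2 u hu').hasDerivAt.fun_sub ((hasDerivAt_id u).const_mul c)
      rw [hd.deriv]
      linarith [h3 u hu']
  simp only at key
  linarith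

private lemma taylor_le_aux {f : ℝ → ℝ} {a b c : ℝ} (hab : a ≤ b)
    (h1 : ∀ t ∈ Icc a b, DifferentiableAt ℝ f t)
    (h2 : ∀ t ∈ Icc a b, DifferentiableAt ℝ (deriv f) t)
    (h3 : ∀ t ∈ Icc a b, deriv (deriv f) t ≤ c) :
    f b ≤ f a + deriv f a * (b - a) + c * (b - a) ^ 2 / 2 := by
  have hdle := deriv_le_aux h2 h3
  have key : (fun t => f t - (deriv f a * (t - a) + c * (t - a) ^ 2 / 2)) b ≤
      (fun t => f t - (deriv f a * (t - a) + c * (t - a) ^ 2 / 2)) a := by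
    apply mono_aux hab
    · intro u hu
      exact (h1 u hu).sub (by fun_prop)
    · intro u hu
      have hu' : u ∈ Icc a b := ⟨hu.1.le, hu.2.le⟩
      have h1' : HasDerivAt (fun t : ℝ => t - a) 1 u := (hasDerivAt_id u).sub_const a
      have h2' : HasDerivAt (fun t : ℝ => (t - a) ^ 2) (2 * (u - a)) u := by
        simpa using h1'.fun_pow 2
      have hP : HasDerivAt (fun t => deriv f a * (t - a) + c * (t - a) ^ 2 / 2)
          (deriv f a + c * (u - a)) u := by
        have := (h1'.const_mul (deriv f a)).fun_add ((h2'.const_mul c).div_const 2)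
        exact this.congr_deriv (by ring)
      have hder : HasDerivAt (fun t => f t - (deriv f a * (t - a) + c * (t - a) ^ 2 / 2))
          (deriv f u - (deriv f a + c * (u - a))) u := (h1 u hu').hasDerivAt.sub hP
      rw [hder.deriv]
      linarith [hdle u hu']
  simp only at key
  linarith

private lemma deriv_ge_aux {f : ℝ → ℝ} {a b c : ℝ}
    (h2 : ∀ t ∈ Icc a b, DifferentiableAt ℝ (deriv f) t)
    (h3 : ∀ t ∈ Icc a b, deriv (deriv f) t ≤ c) :
    ∀ t ∈ Icc a b, deriv f b + c * (t - b) ≤ deriv f t := by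
  intro t ht
  have key : (fun u => deriv f u - c * u) b ≤ (fun u => deriv f u - c * u) t := by
    apply mono_aux ht.2
    · intro u hu
      exact (h2 u ⟨ht.1.trans hu.1, hu.2⟩).sub ((differentiable_id.const_mul c) u)
    · intro u hu
      have hu' : u ∈ Icc a b := ⟨ht.1.trans hu.1.le, hu.2.le⟩
      have hd : HasDerivAt (fun u => deriv f u - c * u) (deriv (deriv f) u - c) u := by
        simpa using (h2 u hu').hasDerivAt.fun_sub ((hasDerivAt_id u).const_mul c)
      rw [hd.deriv]
      linarith [h3 u hu']
  simp only at key
  linarith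

private lemma taylor_ge_aux {f : ℝ → ℝ} {a b c : ℝ} (hab : a ≤ b)
    (h1 : ∀ t ∈ Icc a b, DifferentiableAt ℝ f t)
    (h2 : ∀ t ∈ Icc a b, DifferentiableAt ℝ (deriv f) t)
    (h3 : ∀ t ∈ Icc a b, deriv (deriv f) t ≤ c) :
    f a ≤ f b - deriv f b * (b - a) + c * (b - a) ^ 2 / 2 := by
  have hdge := deriv_ge_aux h2 h3
  have key : (fun t => f t - (deriv f b * (t - b) + c * (t - b) ^ 2 / 2)) a ≤
      (fun t => f t - (deriv f b * (t - b) + c * (t - b) ^ 2 / 2)) b := by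
    apply mono_aux' hab
    · intro u hu
      exact (h1 u hu).sub (by fun_prop)
    · intro u hu
      have hu' : u ∈ Icc a b := ⟨hu.1.le, hu.2.le⟩
      have h1' : HasDerivAt (fun t : ℝ => t - b) 1 u := (hasDerivAt_id u).sub_const b
      have h2' : HasDerivAt (fun t : ℝ => (t - b) ^ 2) (2 * (u - b)) u := by
        simpa using h1'.fun_pow 2
      have hP : HasDerivAt (fun t => deriv f b * (t - b) + c * (t - b) ^ 2 / 2)
          (deriv f b + c * (u - b)) u := by
        have := (h1'.const_mul (deriv f b)).fun_add ((h2'.const_mul c).div_const 2)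
        exact this.congr_deriv (by ring)
      have hder : HasDerivAt (fun t => f t - (deriv f b * (t - b) + c * (t - b) ^ 2 / 2))
          (deriv f u - (deriv f b + c * (u - b))) u := (h1 u hu').hasDerivAt.sub hP
      rw [hder.deriv]
      linarith [hdge u hu']
  simp only at key
  linarith

set_option maxHeartbeats 1000000 in
/-- The ODE-inequality lemma from the proof of Theorem A: a nonnegative twice
differentiable function with w'' ≤ C₅ - w on [s₀,∞) is bounded above, eventually by
(C₅ + 1) + (2(C₅ + 1))². -/
theorem stmt_13 (s₀ C₅ : ℝ) (hC₅ : 0 < C₅) (w : ℝ → ℝ)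
    (hw1 : ∀ s : ℝ, s₀ ≤ s → DifferentiableAt ℝ w s)
    (hw2 : ∀ s : ℝ, s₀ ≤ s → DifferentiableAt ℝ (deriv w) s)
    (hw_nonneg : ∀ s : ℝ, s₀ ≤ s → 0 ≤ w s)
    (hineq : ∀ s : ℝ, s₀ ≤ s → deriv (deriv w) s ≤ C₅ - w s) :
    (∃ M : ℝ, ∀ s : ℝ, s₀ ≤ s → w s ≤ M) ∧
    ∃ s₁ : ℝ, ∀ s : ℝ, s₁ ≤ s → w s ≤ (C₅ + 1) + (2 * (C₅ + 1)) ^ 2 := by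
  set A : ℝ := C₅ + 1 with hA
  clear_value A
  have hA1 : 1 ≤ A := by simp only [hA]; linarith
  -- Claim 1: the set {w ≤ A} is unbounded
  have claim1 : ∀ T, s₀ ≤ T → ∃ t, T ≤ t ∧ w t ≤ A := by
    intro T hT
    by_contra hcon
    push_neg at hcon
    set δ : ℝ := 2 * (|w T| + |deriv w T| + 1) with hδ
    have hu := abs_nonneg (w T)
    have hv := abs_nonneg (deriv w T)
    have hδ1 : 2 ≤ δ := by simp only [hδ]; linarith
    have ht := taylor_le_aux (f := w) (c := -1) (show T ≤ T + δ by linarith)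
      (fun t ht => hw1 t (hT.trans ht.1))
      (fun t ht => hw2 t (hT.trans ht.1))
      (fun t ht => by
        have h1 := hineq t (hT.trans ht.1)
        have h2 := hcon t ht.1
        linarith)
    have h0 := hw_nonneg (T + δ) (by linarith)
    have hle1 := le_abs_self (w T)
    have hle2 := le_abs_self (deriv w T)
    have hble : deriv w T * (T + δ - T) ≤ |deriv w T| * δ := by
      have he : T + δ - T = δ := by ring
      rw [he]
      exact mul_le_mul_of_nonneg_right hle2 (by linarith)
    have hsq : (T + δ - T) ^ 2 = δ ^ 2 := by ring
    rw [hsq] at ht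
    nlinarith [sq_nonneg (|w T| + |deriv w T|)]
  obtain ⟨a, ha1, ha2⟩ := claim1 (s₀ + 1) (by linarith)
  have has₀ : s₀ ≤ a := by linarith
  -- Claim 2: beyond a, w is bounded by A + (2A)^2
  have claim2 : ∀ s, a ≤ s → w s ≤ A + (2 * A) ^ 2 := by
    intro s hs
    by_contra hcon
    push_neg at hcon
    have hss₀ : s₀ ≤ s := has₀.trans hs
    set S : Set ℝ := {t ∈ Icc a s | w t ≤ A} with hS
    have hSne : S.Nonempty := ⟨a, ⟨left_mem_Icc.2 hs, ha2⟩⟩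
    have hSbdd : BddAbove S := ⟨s, fun t ht => ht.1.2⟩
    have hScl : IsClosed S := by
      have hcont : ContinuousOn w (Icc a s) := fun t ht =>
        (hw1 t (has₀.trans ht.1)).continuousAt.continuousWithinAt
      exact hcont.preimage_isClosed_of_isClosed isClosed_Icc isClosed_Iic
    set a' : ℝ := sSup S with ha'def
    clear_value a'
    have ha'S : a' ∈ S := ha'def ▸ hScl.csSup_mem hSne hSbdd
    have ha'Icc : a' ∈ Icc a s := ha'S.1
    have ha'A : w a' ≤ A := ha'S.2
    have ha's₀ : s₀ + 1 ≤ a' := ha1.trans ha'Icc.1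
    have hgt : ∀ t, a' < t → t ≤ s → A < w t := by
      intro t h1t h2t
      by_contra h
      push_neg at h
      have htS : t ∈ S := ⟨⟨ha'Icc.1.trans h1t.le, h2t⟩, h⟩
      have hle := le_csSup hSbdd htS
      rw [← ha'def] at hle
      exact absurd hle (not_le.2 h1t)
    have ha'lt : a' < s := by
      rcases lt_or_eq_of_le ha'Icc.2 with h | h
      · exact h
      · exfalso
        rw [h] at ha'A
        nlinarith [sq_nonneg (2 * A)]
    have ha'ge : A ≤ w a' := by
      have hten : Tendsto w (𝓝[>] a') (𝓝 (w a')) :=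
        ((hw1 a' (by linarith)).continuousAt.tendsto).mono_left nhdsWithin_le_nhds
      refine ge_of_tendsto hten ?_
      filter_upwards [Ioo_mem_nhdsGT_of_mem ⟨le_refl a', ha'lt⟩] with t ht
      exact (hgt t ht.1 ht.2.le).le
    have hwa' : w a' = A := le_antisymm ha'A ha'ge
    set b : ℝ := deriv w a' with hbdef
    clear_value b
    -- second derivative ≤ -1 on [a', s]
    have hsec : ∀ t ∈ Icc a' s, deriv (deriv w) t ≤ -1 := by
      intro t ht
      have hws : A ≤ w t := by
        rcases eq_or_lt_of_le ht.1 with h | h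
        · rw [← h]; exact ha'ge
        · exact (hgt t h ht.2).le
      have := hineq t (by linarith [ht.1])
      simp only [hA] at hws
      linarith
    have hfwd := taylor_le_aux (f := w) (c := -1) ha'lt.le
      (fun t ht => hw1 t (by linarith [ht.1]))
      (fun t ht => hw2 t (by linarith [ht.1])) hsec
    rw [hwa'] at hfwd
    -- hfwd : w s ≤ A + b * (s - a') + (-1) * (s - a')^2 / 2
    rcases le_or_gt b 0 with hb0 | hb0
    · nlinarith [sq_nonneg (s - a'), sq_nonneg (2 * A),
        mul_nonneg (neg_nonneg.2 hb0) (sub_nonneg.2 ha'lt.le)]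
    · -- bound b ≤ 2A
      have hb2A : b ≤ 2 * A := by
        rcases le_or_gt b (C₅ * (a' - s₀)) with hcase | hcase
        · -- go back by b / C₅
          set δ : ℝ := b / C₅ with hδdef
          clear_value δ
          have hδpos : 0 < δ := hδdef ▸ div_pos hb0 hC₅
          have hδb : C₅ * δ = b := by
            rw [hδdef]; field_simp
          have hts : s₀ ≤ a' - δ := by
            have hδle : δ ≤ a' - s₀ := by
              rw [hδdef, div_le_iff₀ hC₅]
              nlinarith
            linarith
          have hbk := taylor_ge_aux (f := w) (c := C₅) (show a' - δ ≤ a' by linarith)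
            (fun t ht => hw1 t (hts.trans ht.1))
            (fun t ht => hw2 t (hts.trans ht.1))
            (fun t ht => by
              have h1 := hineq t (hts.trans ht.1)
              have h2 := hw_nonneg t (hts.trans ht.1)
              linarith)
          have h0 := hw_nonneg (a' - δ) hts
          rw [hwa'] at hbk
          -- hbk : w (a' - δ) ≤ A - b * (a' - (a' - δ)) + C₅ * (a' - (a' - δ))^2/2
          have e1 : b * δ = C₅ * δ * δ := by rw [← hδb]
          have h8 : C₅ * δ ^ 2 ≤ 2 * A := by nlinarith [hbk, h0, e1]
          have hb2 : b ^ 2 ≤ 2 * A * C₅ := by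
            have e2 : b ^ 2 = C₅ * (C₅ * δ ^ 2) := by rw [← hδb]; ring
            rw [e2]
            nlinarith [mul_le_mul_of_nonneg_left h8 hC₅.le]
          by_contra hbc
          push_neg at hbc
          nlinarith [hb2, hbc, hA1, mul_lt_mul_of_pos_left hbc hb0,
            mul_lt_mul_of_pos_right hbc (by linarith : (0:ℝ) < 2 * A)]
        · -- go back to s₀
          have hδ1 : 1 ≤ a' - s₀ := by linarith
          have hbk := taylor_ge_aux (f := w) (c := C₅) (show s₀ ≤ a' by linarith)
            (fun t ht => hw1 t ht.1)
            (fun t ht => hw2 t ht.1)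
            (fun t ht => by
              have h1 := hineq t ht.1
              have h2 := hw_nonneg t ht.1
              linarith)
          have h0 := hw_nonneg s₀ le_rfl
          rw [hwa'] at hbk
          have h5 : C₅ * (a' - s₀) * (a' - s₀) ≤ b * (a' - s₀) :=
            mul_le_mul_of_nonneg_right hcase.le (by linarith)
          have h6 : b * 1 ≤ b * (a' - s₀) := mul_le_mul_of_nonneg_left hδ1 hb0.le
          nlinarith [hbk, h0, h5, h6]
      have hq : b * (s - a') - (s - a') ^ 2 / 2 ≤ b ^ 2 / 2 := by
        nlinarith [sq_nonneg (b - (s - a'))]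
      have hbb : b ^ 2 ≤ (2 * A) ^ 2 := by
        nlinarith [mul_self_le_mul_self hb0.le hb2A]
      nlinarith [hfwd, hcon, hq, hbb, sq_nonneg (2 * A)]
  constructor
  · obtain ⟨C, hC⟩ := (isCompact_Icc : IsCompact (Icc s₀ a)).exists_bound_of_continuousOn
      (fun t ht => (hw1 t ht.1).continuousAt.continuousWithinAt)
    refine ⟨max C ((C₅ + 1) + (2 * (C₅ + 1)) ^ 2), fun s hs => ?_⟩
    rcases le_total s a with h | h
    · have hb := hC s ⟨hs, h⟩
      rw [Real.norm_eq_abs] at hb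
      exact le_trans (le_trans (le_abs_self _) hb) (le_max_left _ _)
    · refine le_trans ?_ (le_max_right _ _)
      rw [← hA]
      exact claim2 s h
  · exact ⟨a, fun s hs => claim2 s hs⟩
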